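/- One step of the linked-list Turing machine simulation is correct for left moves: under the analogous update allocating a new blank cell to the left when h.left = none, the resulting implementation configuration is (q', t') with t'(1) = s' and t'(i) = t(i−1) for i ≠ 1. -/

import Mathlib

inductive Dir | L | R

/-- A tape cell: optional left and right pointers and a symbol. -/
structure Cell (Γ L : Type*) where
  left : Option L
  right : Option L
  symbol : Γ

def followR {Γ L : Type*} (σ : L → Option (Cell Γ L)) : Option L → ℕ → Option L
  | ol, 0 => ol
  | ol, k + 1 => followR σ (ol.bind fun ℓ => (σ ℓ).bind Cell.right) k

def followL {Γ L : Type*} (σ : L → Option (Cell Γ L)) : Option L → ℕ → Option L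
  | ol, 0 => ol
  | ol, k + 1 => followL σ (ol.bind fun ℓ => (σ ℓ).bind Cell.left) k

def symAt {Γ L : Type*} (σ : L → Option (Cell Γ L)) (B : Γ) (ol : Option L) : Γ :=
  match ol.bind σ with
  | some c => c.symbol
  | none => B

/-- Tape induced by a head pointer. -/
def tapeOf {Γ L : Type*} (σ : L → Option (Cell Γ L)) (B : Γ) (h : L) : ℤ → Γ :=
  fun i =>
    if 0 ≤ i then symAt σ B (followR σ (some h) i.toNat)
    else symAt σ B (followL σ (some h) (-i).toNat)

/-- Left-move update: write `s'` to the head cell, allocate a fresh blank cell to the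
left if needed, and move the head left. -/
def stepL {Γ L : Type*} [DecidableEq L] (σ : L → Option (Cell Γ L)) (B : Γ)
    (h : L) (s' : Γ) (fresh : L) : (L → Option (Cell Γ L)) × L :=
  match σ h with
  | none => (σ, h)
  | some cl =>
    match cl.left with
    | some l => (Function.update σ h (some ⟨cl.left, cl.right, s'⟩), l)
    | none =>
      (Function.update (Function.update σ h (some ⟨some fresh, cl.right, s'⟩))
        fresh (some ⟨none, some h, B⟩), fresh)

lemma followR_none {Γ L : Type*} (σ : L → Option (Cell Γ L)) :
    ∀ m, followR σ none m = none
  | 0 => rfl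
  | m + 1 => by
    show followR σ (Option.bind none _) m = none
    exact followR_none σ m

lemma followL_none {Γ L : Type*} (σ : L → Option (Cell Γ L)) :
    ∀ m, followL σ none m = none
  | 0 => rfl
  | m + 1 => by
    show followL σ (Option.bind none _) m = none
    exact followL_none σ m

section chain
variable {Γ L : Type*} (σ : L → Option (Cell Γ L)) (B : Γ)
  (n : ℕ) (c : Fin (n + 1) → L) (S : Fin (n + 1) → Γ)

lemma followR_chain
    (hcell : ∀ i : Fin (n + 1), σ (c i) = some
      { left := if _ : i.val = 0 then none
                else some (c ⟨i.val - 1, (by have := i.isLt; omega : _ < Nat.succ n)⟩),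
        right := if _ : i.val = n then none
                 else some (c ⟨i.val + 1, (by have := i.isLt; omega : _ < Nat.succ n)⟩),
        symbol := S i }) :
    ∀ (m : ℕ) (j : Fin (n + 1)), followR σ (some (c j)) m =
      if h : j.val + m ≤ n then some (c ⟨j.val + m, by omega⟩) else none
  | 0, j => by
    rw [dif_pos (by omega)]
    show some (c j) = _
    congr 1
  | m + 1, j => by
    show followR σ ((σ (c j)).bind Cell.right) m = _
    rw [hcell j]
    show followR σ (if _ : j.val = n then none else _) m = _
    by_cases hj : j.val = n
    · rw [dif_pos hj, followR_none, dif_neg (by omega)]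
    · rw [dif_neg hj]
      show followR σ (some (c ⟨j.val + 1, _⟩)) m = _
      rw [followR_chain hcell m ⟨j.val + 1, by omega⟩]
      by_cases h : j.val + (m + 1) ≤ n
      · rw [dif_pos (by simpa using by omega : (⟨j.val+1, by omega⟩ : Fin (n+1)).val + m ≤ n),
          dif_pos h]
        congr 1
        apply congrArg
        ext; simp; omega
      · rw [dif_neg (by simp; omega), dif_neg h]

lemma followL_chain
    (hcell : ∀ i : Fin (n + 1), σ (c i) = some
      { left := if _ : i.val = 0 then none
                else some (c ⟨i.val - 1, (by have := i.isLt; omega : _ < Nat.succ n)⟩),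
        right := if _ : i.val = n then none
                 else some (c ⟨i.val + 1, (by have := i.isLt; omega : _ < Nat.succ n)⟩),
        symbol := S i }) :
    ∀ (m : ℕ) (j : Fin (n + 1)), followL σ (some (c j)) m =
      if h : m ≤ j.val then some (c ⟨j.val - m, by omega⟩) else none
  | 0, j => by
    rw [dif_pos (by omega)]
    show some (c j) = _
    congr 1
  | m + 1, j => by
    show followL σ ((σ (c j)).bind Cell.left) m = _
    rw [hcell j]
    show followL σ (if _ : j.val = 0 then none else _) m = _
    by_cases hj : j.val = 0
    · rw [dif_pos hj, followL_none, dif_neg (by omega)]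
    · rw [dif_neg hj]
      show followL σ (some (c ⟨j.val - 1, _⟩)) m = _
      rw [followL_chain hcell m ⟨j.val - 1, by have := j.isLt; omega⟩]
      by_cases h : m + 1 ≤ j.val
      · rw [dif_pos (by simp; omega), dif_pos h]
        congr 1
        apply congrArg
        ext; simp; omega
      · rw [dif_neg (by simp; omega), dif_neg h]

lemma tapeOf_chain
    (hcell : ∀ i : Fin (n + 1), σ (c i) = some
      { left := if _ : i.val = 0 then none
                else some (c ⟨i.val - 1, (by have := i.isLt; omega : _ < Nat.succ n)⟩),
        right := if _ : i.val = n then none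
                 else some (c ⟨i.val + 1, (by have := i.isLt; omega : _ < Nat.succ n)⟩),
        symbol := S i })
    (k : Fin (n + 1)) :
    tapeOf σ B (c k) = fun i : ℤ =>
      if h : 0 ≤ (k.val : ℤ) + i ∧ (k.val : ℤ) + i ≤ (n : ℤ)
      then S ⟨((k.val : ℤ) + i).toNat, by omega⟩ else B := by
  funext i
  unfold tapeOf
  by_cases hi : 0 ≤ i
  · rw [if_pos hi, followR_chain σ n c S hcell i.toNat k]
    by_cases h : k.val + i.toNat ≤ n
    · rw [dif_pos h]
      rw [dif_pos (by omega)]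
      show (match σ (c _) with | some c => c.symbol | none => B) = _
      rw [hcell]
      show S _ = S _
      congr 1
      ext
      simp
      omega
    · rw [dif_neg h, dif_neg (by omega)]
      rfl
  · rw [if_neg hi, followL_chain σ n c S hcell (-i).toNat k]
    by_cases h : (-i).toNat ≤ k.val
    · rw [dif_pos h]
      rw [dif_pos (by constructor <;> [omega; (have := k.isLt; omega)])]
      show (match σ (c _) with | some c => c.symbol | none => B) = _
      rw [hcell]
      show S _ = S _
      congr 1
      ext
      simp
      omega
    · rw [dif_neg h, dif_neg (by omega)]
      rfl


lemma tapeOf_chain'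
    (hcell : ∀ i : Fin (n + 1), σ (c i) = some
      { left := if _ : i.val = 0 then none
                else some (c ⟨i.val - 1, (by have := i.isLt; omega : _ < Nat.succ n)⟩),
        right := if _ : i.val = n then none
                 else some (c ⟨i.val + 1, (by have := i.isLt; omega : _ < Nat.succ n)⟩),
        symbol := S i })
    (m : ℕ) (hm : m < n + 1) :
    tapeOf σ B (c ⟨m, hm⟩) = fun i : ℤ =>
      if h : 0 ≤ (m : ℤ) + i ∧ (m : ℤ) + i ≤ (n : ℤ)
      then S ⟨((m : ℤ) + i).toNat, by omega⟩ else B :=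
  tapeOf_chain σ B n c S hcell ⟨m, hm⟩

end chain

lemma mk_app_congr {β : Sort*} {m : ℕ} (f : Fin m → β) (x y : ℕ)
    (hx : x < m) (hy : y < m) (h : x = y) : f ⟨x, hx⟩ = f ⟨y, hy⟩ := by
  subst h; rfl

def extChain {L : Type*} (fresh : L) (n : ℕ) (c : Fin (n + 1) → L) : Fin (n + 1 + 1) → L :=
  fun j => if _ : j.val = 0 then fresh else c ⟨j.val - 1, by have := j.isLt; omega⟩

lemma extChain_zero {L : Type*} (fresh : L) (n : ℕ) (c : Fin (n + 1) → L)
    (j : Fin (n + 1 + 1)) (h : j.val = 0) : extChain fresh n c j = fresh := by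
  simp [extChain, h]

lemma extChain_at {L : Type*} (fresh : L) (n : ℕ) (c : Fin (n + 1) → L)
    (j : Fin (n + 1 + 1)) (m : ℕ) (hm : m < n + 1) (h : j.val = m + 1) :
    extChain fresh n c j = c ⟨m, hm⟩ := by
  rw [extChain, dif_neg (by omega)]
  exact mk_app_congr c _ _ _ _ (by omega)

def extSym {Γ : Type*} (B s' : Γ) (n : ℕ) (S : Fin (n + 1) → Γ) : Fin (n + 1 + 1) → Γ :=
  fun j => if j.val = 0 then B else if j.val = 1 then s'
    else S ⟨j.val - 1, by have := j.isLt; omega⟩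

lemma extSym_zero {Γ : Type*} (B s' : Γ) (n : ℕ) (S : Fin (n + 1) → Γ)
    (j : Fin (n + 1 + 1)) (h : j.val = 0) : extSym B s' n S j = B := by
  simp [extSym, h]

lemma extSym_one {Γ : Type*} (B s' : Γ) (n : ℕ) (S : Fin (n + 1) → Γ)
    (j : Fin (n + 1 + 1)) (h : j.val = 1) : extSym B s' n S j = s' := by
  simp [extSym, h]

lemma extSym_at {Γ : Type*} (B s' : Γ) (n : ℕ) (S : Fin (n + 1) → Γ)
    (j : Fin (n + 1 + 1)) (m : ℕ) (hm : m < n + 1) (h : j.val = m + 1) (h2 : 2 ≤ j.val) :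
    extSym B s' n S j = S ⟨m, hm⟩ := by
  rw [extSym]
  rw [if_neg (by omega : ¬ j.val = 0), if_neg (by omega : ¬ j.val = 1)]
  exact mk_app_congr S _ _ _ _ (by omega)

def updSym {Γ : Type*} (s' : Γ) (n m : ℕ) (S : Fin (n + 1) → Γ) : Fin (n + 1) → Γ :=
  fun j => if j.val = m then s' else S j

lemma updSym_eq {Γ : Type*} (s' : Γ) (n m : ℕ) (S : Fin (n + 1) → Γ)
    (j : Fin (n + 1)) (h : j.val = m) : updSym s' n m S j = s' := by
  simp [updSym, h]

lemma updSym_ne {Γ : Type*} (s' : Γ) (n m : ℕ) (S : Fin (n + 1) → Γ)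
    (j : Fin (n + 1)) (h : ¬ j.val = m) : updSym s' n m S j = S j := by
  simp [updSym, h]

set_option maxHeartbeats 1000000 in
/-- on a well-formed doubly-linked list with head `c k`, the left-move
update realizes exactly the TM left-move transition on the induced tape:
the new induced tape `t'` satisfies `t' 1 = s'` and `t' i = t (i-1)` otherwise. -/
theorem stepL_correct {Γ L : Type*} [DecidableEq L]
    (σ : L → Option (Cell Γ L)) (B : Γ)
    (n : ℕ) (c : Fin (n + 1) → L) (S : Fin (n + 1) → Γ)
    (hinj : Function.Injective c)
    (hcell : ∀ i : Fin (n + 1), σ (c i) = some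
      { left := if _ : i.val = 0 then none
                else some (c ⟨i.val - 1, by have := i.isLt; omega⟩),
        right := if _ : i.val = n then none
                 else some (c ⟨i.val + 1, by have := i.isLt; omega⟩),
        symbol := S i })
    (k : Fin (n + 1)) (fresh : L) (hfresh : fresh ∉ Set.range c)
    {Q : Type*} (δ : Q × Γ → Option (Q × Γ × Dir)) (q q' : Q) (s' : Γ)
    (hδ : δ (q, tapeOf σ B (c k) 0) = some (q', s', Dir.L)) :
    tapeOf (stepL σ B (c k) s' fresh).1 B (stepL σ B (c k) s' fresh).2 =
      fun i : ℤ => if i = 1 then s' else tapeOf σ B (c k) (i - 1) := by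

  have hk := k.isLt
  have hcne : ∀ j : Fin (n + 1), c j ≠ fresh := fun j hj => hfresh ⟨j, hj⟩
  by_cases hk0 : k.val = 0
  · -- allocate fresh cell
    have hck : σ (c k) = some ⟨none,
        if _ : k.val = n then none else some (c ⟨k.val + 1, by omega⟩), S k⟩ := by
      rw [hcell k, dif_pos hk0]
    have hstep : stepL σ B (c k) s' fresh =
        (Function.update (Function.update σ (c k)
            (some ⟨some fresh,
              if _ : k.val = n then none else some (c ⟨k.val + 1, by omega⟩), s'⟩))
          fresh (some ⟨none, some (c k), B⟩), fresh) := by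
      unfold stepL; rw [hck]
    have hckc : ∀ h0 : (0 : ℕ) < n + 1, c ⟨0, h0⟩ = c k :=
      fun h0 => mk_app_congr c 0 k.val h0 hk (by omega)
    have hcell' : ∀ i : Fin (n + 1 + 1),
        (Function.update (Function.update σ (c k)
            (some ⟨some fresh,
              if _ : k.val = n then none else some (c ⟨k.val + 1, by omega⟩), s'⟩))
          fresh (some ⟨none, some (c k), B⟩)) (extChain fresh n c i) = some
        { left := if _ : i.val = 0 then none
                  else some (extChain fresh n c ⟨i.val - 1, by have := i.isLt; omega⟩),
          right := if _ : i.val = n + 1 then none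
                   else some (extChain fresh n c ⟨i.val + 1, by have := i.isLt; omega⟩),
          symbol := extSym B s' n S i } := by
      intro i
      have hilt := i.isLt
      rcases Nat.lt_trichotomy i.val 1 with h1 | h1 | h1
      · -- i.val = 0
        have h0 : i.val = 0 := by omega
        rw [extChain_zero fresh n c i h0, Function.update_self]
        rw [dif_pos h0, dif_neg (show ¬ i.val = n + 1 by omega)]
        rw [extSym_zero B s' n S i h0]
        rw [extChain_at fresh n c ⟨i.val + 1, by omega⟩ k.val hk (by simp; omega)]
      · -- i.val = 1
        rw [extChain_at fresh n c i k.val hk (by omega)]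
        rw [Function.update_of_ne (hcne k), Function.update_self]
        rw [dif_neg (show ¬ i.val = 0 by omega)]
        rw [extSym_one B s' n S i h1]
        rw [extChain_zero fresh n c ⟨i.val - 1, by omega⟩ (by simp; omega)]
        by_cases hn : k.val = n
        · rw [dif_pos hn, dif_pos (show i.val = n + 1 by omega)]
        · rw [dif_neg hn, dif_neg (show ¬ i.val = n + 1 by omega)]
          rw [extChain_at fresh n c ⟨i.val + 1, by omega⟩ (k.val + 1) (by omega)
            (by simp; omega)]
      · -- i.val ≥ 2
        have pf1 : i.val - 1 < n + 1 := by omega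
        rw [extChain_at fresh n c i (i.val - 1) pf1 (by omega)]
        rw [Function.update_of_ne (hcne ⟨i.val - 1, pf1⟩)]
        rw [Function.update_of_ne (show c ⟨i.val - 1, pf1⟩ ≠ c k from by
          intro hEq
          have h2 := congrArg Fin.val (hinj hEq)
          simp at h2; omega)]
        rw [hcell ⟨i.val - 1, pf1⟩]
        rw [dif_neg (show ¬ i.val = 0 by omega)]
        rw [dif_neg (show ¬ (⟨i.val - 1, pf1⟩ : Fin (n + 1)).val = 0 from by simp; omega)]
        rw [extSym_at B s' n S i (i.val - 1) pf1 (by omega) h1]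
        rw [extChain_at fresh n c ⟨i.val - 1, by omega⟩ (i.val - 1 - 1) (by omega)
          (by simp; omega)]
        by_cases hn : i.val - 1 = n
        · rw [dif_pos (show (⟨i.val - 1, pf1⟩ : Fin (n + 1)).val = n from by simp [hn])]
          rw [dif_pos (show i.val = n + 1 by omega)]
        · rw [dif_neg (show ¬ (⟨i.val - 1, pf1⟩ : Fin (n + 1)).val = n from by simp; omega)]
          rw [dif_neg (show ¬ i.val = n + 1 by omega)]
          rw [extChain_at fresh n c ⟨i.val + 1, by omega⟩ i.val (by omega) (by simp)]
          rw [mk_app_congr c (i.val - 1 + 1) i.val (by omega) (by omega) (by omega)]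
    have Ht := tapeOf_chain' _ B (n + 1) (extChain fresh n c) (extSym B s' n S) hcell'
      0 (by omega)
    rw [extChain_zero fresh n c ⟨0, by omega⟩ rfl] at Ht
    rw [hstep]
    show tapeOf _ B fresh = _
    rw [Ht, tapeOf_chain σ B n c S hcell k]
    funext i
    dsimp only
    by_cases hB : i = 1
    · rw [if_pos hB, dif_pos (show (0:ℤ) ≤ ((0:ℕ) : ℤ) + i ∧ ((0:ℕ) : ℤ) + i ≤ ((n + 1 : ℕ) : ℤ)
        by omega)]
      refine extSym_one B s' n S _ ?_
      simp only [Fin.val_mk]; omega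
    · rw [if_neg hB]
      by_cases hC : (0:ℤ) ≤ (k.val : ℤ) + (i - 1) ∧ (k.val : ℤ) + (i - 1) ≤ (n : ℤ)
      · rw [dif_pos hC, dif_pos (show (0:ℤ) ≤ ((0:ℕ) : ℤ) + i ∧ ((0:ℕ) : ℤ) + i ≤ ((n + 1 : ℕ) : ℤ)
          by omega)]
        refine extSym_at B s' n S _ _ _ ?_ ?_ <;> (simp only [Fin.val_mk]; omega)
      · rw [dif_neg hC]
        by_cases hD : i = 0
        · subst hD
          rw [dif_pos (show (0:ℤ) ≤ ((0:ℕ) : ℤ) + 0 ∧ ((0:ℕ) : ℤ) + 0 ≤ ((n + 1 : ℕ) : ℤ)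
            by omega)]
          refine extSym_zero B s' n S _ ?_
          simp only [Fin.val_mk]; omega
        · rw [dif_neg (show ¬((0:ℤ) ≤ ((0:ℕ) : ℤ) + i ∧ ((0:ℕ) : ℤ) + i ≤ ((n + 1 : ℕ) : ℤ))
            by omega)]
  · -- move within the list
    have hck : σ (c k) = some ⟨some (c ⟨k.val - 1, by omega⟩),
        if _ : k.val = n then none else some (c ⟨k.val + 1, by omega⟩), S k⟩ := by
      rw [hcell k, dif_neg hk0]
    have hstep : stepL σ B (c k) s' fresh =
        (Function.update σ (c k) (some ⟨some (c ⟨k.val - 1, by omega⟩),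
            if _ : k.val = n then none else some (c ⟨k.val + 1, by omega⟩), s'⟩),
          c ⟨k.val - 1, by omega⟩) := by
      unfold stepL; rw [hck]
    have hcell' : ∀ i : Fin (n + 1),
        (Function.update σ (c k) (some ⟨some (c ⟨k.val - 1, by omega⟩),
            if _ : k.val = n then none else some (c ⟨k.val + 1, by omega⟩), s'⟩)) (c i)
          = some
        { left := if _ : i.val = 0 then none
                  else some (c ⟨i.val - 1, by have := i.isLt; omega⟩),
          right := if _ : i.val = n then none
                   else some (c ⟨i.val + 1, by have := i.isLt; omega⟩),
          symbol := updSym s' n k.val S i } := by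
      intro i
      by_cases hik : i = k
      · subst hik
        rw [Function.update_self, updSym_eq s' n i.val S i rfl, dif_neg hk0]
      · rw [Function.update_of_ne (fun h => hik (hinj h)), hcell i,
          updSym_ne s' n k.val S i (fun h => hik (Fin.ext h))]
    rw [hstep]
    show tapeOf _ B (c ⟨k.val - 1, by omega⟩) = _
    rw [tapeOf_chain' _ B n c (updSym s' n k.val S) hcell' (k.val - 1) (by omega),
      tapeOf_chain σ B n c S hcell k]
    funext i
    dsimp only
    by_cases hB : i = 1
    · rw [if_pos hB, dif_pos (show (0:ℤ) ≤ ((k.val - 1 : ℕ) : ℤ) + i ∧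
          ((k.val - 1 : ℕ) : ℤ) + i ≤ (n : ℤ) by omega)]
      refine updSym_eq s' n k.val S _ ?_
      simp only [Fin.val_mk]; omega
    · rw [if_neg hB]
      by_cases hC : (0:ℤ) ≤ (k.val : ℤ) + (i - 1) ∧ (k.val : ℤ) + (i - 1) ≤ (n : ℤ)
      · rw [dif_pos hC, dif_pos (show (0:ℤ) ≤ ((k.val - 1 : ℕ) : ℤ) + i ∧
            ((k.val - 1 : ℕ) : ℤ) + i ≤ (n : ℤ) by omega)]
        refine (updSym_ne s' n k.val S _ ?_).trans (mk_app_congr S _ _ _ _ ?_) <;>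
          ((try simp only [Fin.val_mk]); omega)
      · rw [dif_neg hC, dif_neg (show ¬((0:ℤ) ≤ ((k.val - 1 : ℕ) : ℤ) + i ∧
            ((k.val - 1 : ℕ) : ℤ) + i ≤ (n : ℤ)) by omega)]
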